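/- Let a, b > 0 and for each integer N ≥ 2 define H_{N,a,b} = Σ_{j=1}^{N-1} (1/(j(N-j))) min(j/a, (N-j)/b). Then lim_{N→∞} H_{N,a,b} = (1/a)·ln((a+b)/b) + (1/b)·ln((a+b)/a). -/

import Mathlib

open Filter Real Finset Topology

private lemma harm_cast (n : ℕ) :
    (harmonic n : ℝ) = ∑ i ∈ Finset.Ioc 0 n, (1 / (i : ℝ)) := by
  rw [harmonic_eq_sum_Icc]
  push_cast
  rw [← Finset.Icc_add_one_left_eq_Ioc]
  simp [one_div]

private lemma harm_diff (m n : ℕ) (h : m ≤ n) :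
    ∑ i ∈ Finset.Ioc m n, (1 / (i : ℝ)) = (harmonic n : ℝ) - (harmonic m : ℝ) := by
  rw [harm_cast, harm_cast, eq_sub_iff_add_eq, add_comm]
  exact Finset.sum_Ioc_consecutive _ (Nat.zero_le m) h

private lemma harmonic_diff_tendsto (c d : ℕ → ℕ) (r : ℝ) (hr : 0 < r)
    (hc : Tendsto c atTop atTop) (hd : Tendsto d atTop atTop)
    (hratio : Tendsto (fun n => (d n : ℝ) / (c n : ℝ)) atTop (𝓝 r)) :
    Tendsto (fun n => (harmonic (d n) : ℝ) - (harmonic (c n) : ℝ)) atTop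
      (𝓝 (Real.log r)) := by
  have hγ := Real.tendsto_harmonic_sub_log
  have h1 : Tendsto (fun n => (harmonic (d n) : ℝ) - Real.log (d n)) atTop
      (𝓝 Real.eulerMascheroniConstant) := hγ.comp hd
  have h2 : Tendsto (fun n => (harmonic (c n) : ℝ) - Real.log (c n)) atTop
      (𝓝 Real.eulerMascheroniConstant) := hγ.comp hc
  have h3 : Tendsto (fun n => Real.log ((d n : ℝ) / (c n : ℝ))) atTop
      (𝓝 (Real.log r)) := hratio.log hr.ne'
  have h4 := (h1.sub h2).add h3
  rw [sub_self, zero_add] at h4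
  apply h4.congr'
  filter_upwards [hc.eventually (eventually_ge_atTop 1),
    hd.eventually (eventually_ge_atTop 1)] with n hcn hdn
  have hc0 : (0 : ℝ) < c n := by exact_mod_cast hcn
  have hd0 : (0 : ℝ) < d n := by exact_mod_cast hdn
  rw [Real.log_div hd0.ne' hc0.ne']
  ring

theorem HNab_limit (a b : ℝ) (ha : 0 < a) (hb : 0 < b) :
    Filter.Tendsto
      (fun N : ℕ => ∑ j ∈ Finset.Icc 1 (N - 1),
        (1 / ((j : ℝ) * ((N : ℝ) - j))) * min ((j : ℝ) / a) (((N : ℝ) - j) / b))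
      Filter.atTop
      (nhds ((1 / a) * Real.log ((a + b) / b) + (1 / b) * Real.log ((a + b) / a))) := by
  have hab : (0 : ℝ) < a + b := by linarith
  set k : ℕ → ℕ := fun N => ⌊a * N / (a + b)⌋₊ with hk_def
  have hx_nonneg : ∀ N : ℕ, 0 ≤ a * N / (a + b) := fun N => by positivity
  have hk_le : ∀ N : ℕ, (k N : ℝ) ≤ a * N / (a + b) := fun N =>
    Nat.floor_le (hx_nonneg N)
  have hk_le' : ∀ N : ℕ, (k N : ℝ) * (a + b) ≤ a * N := fun N =>
    (le_div_iff₀ hab).mp (hk_le N)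
  have hk_gt : ∀ N : ℕ, a * N / (a + b) - 1 < (k N : ℝ) := fun N => by
    have := Nat.lt_floor_add_one (a * N / (a + b))
    linarith
  have hk_lt : ∀ N : ℕ, 1 ≤ N → k N < N := by
    intro N hN
    rw [hk_def, Nat.floor_lt (hx_nonneg N)]
    rw [div_lt_iff₀ hab]
    have hN' : (1 : ℝ) ≤ N := by exact_mod_cast hN
    nlinarith
  -- k N / N → a/(a+b)
  have hkN : Tendsto (fun N : ℕ => (k N : ℝ) / N) atTop (𝓝 (a / (a + b))) := by
    have hlow : Tendsto (fun N : ℕ => a / (a + b) - 1 / N) atTop (𝓝 (a / (a + b))) := by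
      simpa using (tendsto_const_nhds (x := a / (a + b))).sub (tendsto_one_div_atTop_nhds_zero_nat : Tendsto (fun n : ℕ => 1 / (n : ℝ)) atTop (𝓝 0))
    apply tendsto_of_tendsto_of_tendsto_of_le_of_le' hlow tendsto_const_nhds
    · filter_upwards [eventually_ge_atTop 1] with N hN
      have hN0 : (0 : ℝ) < N := by exact_mod_cast hN
      have heq : a / (a + b) - 1 / N = (a * N / (a + b) - 1) / N := by
        field_simp
      rw [heq, div_le_div_iff_of_pos_right hN0]
      linarith [hk_gt N]
    · filter_upwards [eventually_ge_atTop 1] with N hN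
      have hN0 : (0 : ℝ) < N := by exact_mod_cast hN
      rw [div_le_div_iff₀ hN0 hab]
      linarith [hk_le' N]
  -- atTop facts
  have hNsub1 : Tendsto (fun N : ℕ => N - 1) atTop atTop := tendsto_sub_atTop_nat 1
  have haux : Tendsto (fun N : ℕ => a * N / (a + b) - 1) atTop atTop := by
    apply tendsto_atTop_add_const_right
    exact ((tendsto_natCast_atTop_atTop.const_mul_atTop ha).atTop_div_const hab)
  have hkTop : Tendsto k atTop atTop := by
    rw [← tendsto_natCast_atTop_iff (R := ℝ)]
    exact tendsto_atTop_mono (fun N => (hk_gt N).le) haux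
  have hmcast : ∀ N : ℕ, 1 ≤ N → ((N - 1 - k N : ℕ) : ℝ) = (N : ℝ) - 1 - k N := by
    intro N hN
    have h1 := hk_lt N hN
    have : k N ≤ N - 1 := by omega
    push_cast [Nat.cast_sub this, Nat.cast_sub hN]
    ring
  have hbaux : Tendsto (fun N : ℕ => b * N / (a + b) - 2) atTop atTop := by
    apply tendsto_atTop_add_const_right
    exact ((tendsto_natCast_atTop_atTop.const_mul_atTop hb).atTop_div_const hab)
  have hmTop : Tendsto (fun N : ℕ => N - 1 - k N) atTop atTop := by
    rw [← tendsto_natCast_atTop_iff (R := ℝ)]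
    apply tendsto_atTop_mono' _ _ hbaux
    filter_upwards [eventually_ge_atTop 1] with N hN
    rw [hmcast N hN]
    have h1 := hk_le N
    have h2 : a * N / (a + b) = (N : ℝ) - b * N / (a + b) := by field_simp; ring
    linarith
  -- ratio facts
  have hnum : Tendsto (fun N : ℕ => ((N : ℝ) - 1) / N) atTop (𝓝 1) := by
    have : Tendsto (fun N : ℕ => 1 - 1 / (N : ℝ)) atTop (𝓝 (1 - 0)) :=
      tendsto_const_nhds.sub tendsto_one_div_atTop_nhds_zero_nat
    rw [sub_zero] at this
    apply this.congr'
    filter_upwards [eventually_ge_atTop 1] with N hN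
    have hN0 : (0 : ℝ) < N := by exact_mod_cast hN
    field_simp
  have hr2 : Tendsto (fun N : ℕ => ((N - 1 : ℕ) : ℝ) / (k N : ℝ)) atTop
      (𝓝 ((a + b) / a)) := by
    have h := hnum.div hkN (by positivity : a / (a + b) ≠ 0)
    have hval : (1 : ℝ) / (a / (a + b)) = (a + b) / a := by rw [one_div_div]
    rw [hval] at h
    apply h.congr'
    filter_upwards [eventually_ge_atTop 1, hkTop.eventually (eventually_ge_atTop 1)]
      with N hN hkN1
    have hN0 : (0 : ℝ) < N := by exact_mod_cast hN
    have hk0 : (0 : ℝ) < k N := by exact_mod_cast hkN1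
    rw [Nat.cast_sub hN]
    push_cast
    simp only [Pi.div_apply]
    field_simp
  have hden1 : Tendsto (fun N : ℕ => ((N : ℝ) - 1 - k N) / N) atTop
      (𝓝 (b / (a + b))) := by
    have h := hnum.sub hkN
    have hval : (1 : ℝ) - a / (a + b) = b / (a + b) := by field_simp; ring
    rw [hval] at h
    apply h.congr'
    filter_upwards [eventually_ge_atTop 1] with N hN
    have hN0 : (0 : ℝ) < N := by exact_mod_cast hN
    field_simp
  have hr1 : Tendsto (fun N : ℕ => ((N - 1 : ℕ) : ℝ) / ((N - 1 - k N : ℕ) : ℝ)) atTop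
      (𝓝 ((a + b) / b)) := by
    have h := hnum.div hden1 (by positivity : b / (a + b) ≠ 0)
    have hval : (1 : ℝ) / (b / (a + b)) = (a + b) / b := by rw [one_div_div]
    rw [hval] at h
    apply h.congr'
    filter_upwards [eventually_ge_atTop 1, hmTop.eventually (eventually_ge_atTop 1)]
      with N hN hm1
    have hN0 : (0 : ℝ) < N := by exact_mod_cast hN
    have hm0 : (0 : ℝ) < ((N - 1 - k N : ℕ) : ℝ) := by exact_mod_cast hm1
    rw [hmcast N hN] at hm0 ⊢
    rw [Nat.cast_sub hN]
    push_cast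
    simp only [Pi.div_apply]
    field_simp
  -- the two harmonic-difference limits
  have A1 := harmonic_diff_tendsto (fun N => N - 1 - k N) (fun N => N - 1)
    ((a + b) / b) (by positivity) hmTop hNsub1 hr1
  have A2 := harmonic_diff_tendsto k (fun N => N - 1)
    ((a + b) / a) (by positivity) hkTop hNsub1 hr2
  have hfinal := (A1.const_mul (1 / a)).add (A2.const_mul (1 / b))
  apply hfinal.congr'
  filter_upwards [eventually_ge_atTop 2] with N hN
  -- now the sum identity for fixed N ≥ 2
  set K := k N with hK_def
  have hKlt : K < N := hk_lt N (by omega)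
  have hKle : K ≤ N - 1 := by omega
  have e1 : ∑ j ∈ Finset.Ioc 0 K,
      (1 / ((j : ℝ) * ((N : ℝ) - j))) * min ((j : ℝ) / a) (((N : ℝ) - j) / b)
      = (1 / a) * ((harmonic (N - 1) : ℝ) - (harmonic (N - 1 - K) : ℝ)) := by
    rw [← harm_diff (N - 1 - K) (N - 1) (by omega), Finset.mul_sum]
    rw [show ∑ i ∈ Finset.Ioc (N - 1 - K) (N - 1), (1 / a) * (1 / (i : ℝ))
        = ∑ j ∈ Finset.Ioc 0 K, (1 / a) * (1 / ((N - j : ℕ) : ℝ)) from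
      (Finset.sum_nbij' (fun i => N - i) (fun j => N - j)
        (fun i hi => by simp only [Finset.mem_Ioc] at *; omega)
        (fun j hj => by simp only [Finset.mem_Ioc] at *; omega)
        (fun i hi => by simp only [Finset.mem_Ioc] at hi; omega)
        (fun j hj => by simp only [Finset.mem_Ioc] at hj; omega)
        (fun i hi => by
          simp only [Finset.mem_Ioc] at hi
          rw [Nat.sub_sub_self (by omega)]))]
    apply Finset.sum_congr rfl
    intro j hj
    simp only [Finset.mem_Ioc] at hj
    have hj1 : (1 : ℝ) ≤ j := by exact_mod_cast hj.1
    have hjN : (j : ℝ) < N := by exact_mod_cast lt_of_le_of_lt hj.2 hKlt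
    have hjK : (j : ℝ) ≤ K := by exact_mod_cast hj.2
    have hcond : (j : ℝ) * (a + b) ≤ a * N := by
      have := hk_le' N
      nlinarith
    have hmin : min ((j : ℝ) / a) (((N : ℝ) - j) / b) = (j : ℝ) / a := by
      apply min_eq_left
      rw [div_le_div_iff₀ ha hb]
      nlinarith
    have hj0 : (j : ℝ) ≠ 0 := by positivity
    have hNj0 : (N : ℝ) - (j : ℝ) ≠ 0 := by linarith
    rw [hmin, Nat.cast_sub (by omega : j ≤ N)]
    field_simp
  have e2 : ∑ j ∈ Finset.Ioc K (N - 1),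
      (1 / ((j : ℝ) * ((N : ℝ) - j))) * min ((j : ℝ) / a) (((N : ℝ) - j) / b)
      = (1 / b) * ((harmonic (N - 1) : ℝ) - (harmonic K : ℝ)) := by
    rw [← harm_diff K (N - 1) hKle, Finset.mul_sum]
    apply Finset.sum_congr rfl
    intro j hj
    simp only [Finset.mem_Ioc] at hj
    have hj1 : (1 : ℝ) ≤ j := by
      have : 1 ≤ j := by omega
      exact_mod_cast this
    have hjN : (j : ℝ) < N := by
      have : j < N := by omega
      exact_mod_cast this
    have hjK : (K : ℝ) < j := by exact_mod_cast hj.1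
    have hcond : a * N < (j : ℝ) * (a + b) := by
      have h := (Nat.floor_lt (hx_nonneg N)).mp (by exact_mod_cast hj.1 : k N < j)
      rw [div_lt_iff₀ hab] at h
      linarith
    have hmin : min ((j : ℝ) / a) (((N : ℝ) - j) / b) = ((N : ℝ) - j) / b := by
      apply min_eq_right
      rw [div_le_div_iff₀ hb ha]
      nlinarith
    have hj0 : (j : ℝ) ≠ 0 := by positivity
    have hNj0 : (N : ℝ) - (j : ℝ) ≠ 0 := by linarith
    rw [hmin]
    field_simp
  have hIcc : Finset.Icc 1 (N - 1) = Finset.Ioc 0 (N - 1) := by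
    ext x; simp only [Finset.mem_Icc, Finset.mem_Ioc]; omega
  rw [hIcc, ← Finset.sum_Ioc_consecutive _ (Nat.zero_le K) hKle, e1, e2]
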